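/- If the diamond principle ◊_κ holds at a regular uncountable cardinal κ, then NS_κ is not κ⁺-saturated. -/

import Mathlib

open Ordinal Set Cardinal

/-- `C` is a club (closed unbounded) subset of the ordinal `κ`. -/
def IsClubIn (C : Set Ordinal) (κ : Ordinal) : Prop :=
  C ⊆ Set.Iio κ ∧ (∀ β < κ, ∃ γ ∈ C, β < γ) ∧
    (∀ α < κ, α ≠ 0 → (∀ β < α, ∃ γ ∈ C, β < γ ∧ γ < α) → α ∈ C)

/-- `S` is stationary in `κ`: it meets every club of `κ`. -/
def IsStationaryIn (S : Set Ordinal) (κ : Ordinal) : Prop :=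
  ∀ C, IsClubIn C κ → (S ∩ C).Nonempty

/-- `S^θ_κ`, the set of ordinals below `κ` of cofinality `θ`. -/
def cofSet (κ θ : Cardinal) : Set Ordinal :=
  {α | α < κ.ord ∧ α.cof = θ}

/-- The open interval `(β, κ)` is a club in a limit ordinal `κ`. -/
lemma isClubIn_Ioo {β κ : Ordinal} (hβ : β < κ) (hκ : Order.IsSuccLimit κ) :
    IsClubIn (Set.Ioo β κ) κ := by
  refine ⟨fun x hx => hx.2, fun b hb => ?_, fun α hα hα0 h => ?_⟩
  · refine ⟨max b β + 1, ⟨?_, hκ.succ_lt (max_lt hb hβ)⟩, ?_⟩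
    · exact lt_of_le_of_lt (le_max_right b β) (Order.lt_succ _)
    · exact lt_of_le_of_lt (le_max_left b β) (Order.lt_succ _)
  · rcases lt_or_ge β α with hβα | hαβ
    · obtain ⟨γ, hγC, hβγ, _⟩ := h β hβα
      exact ⟨lt_trans hγC.1 ‹γ < α›, hα⟩
    · obtain ⟨γ, hγC, _, hγα⟩ := h 0 (pos_iff_ne_zero.mpr hα0)
      exact absurd (lt_of_lt_of_le (lt_trans hγα (lt_of_le_of_lt hαβ hγC.1)) le_rfl)
        (lt_irrefl γ)

/-- diamond at a regular uncountable `κ` implies `NS_κ` is not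
`κ⁺`-saturated. -/
theorem diamond_implies_not_saturated (κ : Cardinal.{0}) (hκ : κ.IsRegular)
    (hκω : Cardinal.aleph0 < κ)
    (A : Ordinal.{0} → Set Ordinal.{0})
    (hAsub : ∀ α < κ.ord, A α ⊆ Set.Iio α)
    (hdiamond : ∀ B : Set Ordinal.{0}, B ⊆ Set.Iio κ.ord →
      IsStationaryIn {α | α < κ.ord ∧ B ∩ Set.Iio α = A α} κ.ord) :
    ∃ F : Ordinal.{0} → Set Ordinal.{0},
      (∀ i < (Order.succ κ).ord, F i ⊆ Set.Iio κ.ord ∧ IsStationaryIn (F i) κ.ord) ∧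
      (∀ i j, i < (Order.succ κ).ord → j < (Order.succ κ).ord → i ≠ j →
        ¬ IsStationaryIn (F i ∩ F j) κ.ord) := by
  have hlim : Order.IsSuccLimit κ.ord := isSuccLimit_ord hκω.le
  -- an injective family of κ⁺ many subsets of `Iio κ.ord`
  obtain ⟨g⟩ : Nonempty ((Set.Iio (Order.succ κ).ord : Set Ordinal.{0}) ↪
      Set (Set.Iio κ.ord : Set Ordinal.{0})) := by
    rw [← Cardinal.le_def, Cardinal.mk_Iio_ordinal, mk_set, Cardinal.mk_Iio_ordinal, card_ord, card_ord,
      ← Cardinal.lift_two_power, Cardinal.lift_le]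
    exact Order.succ_le_of_lt (Cardinal.cantor κ)
  set B : Ordinal.{0} → Set Ordinal.{0} := fun i =>
    if h : i < (Order.succ κ).ord then Subtype.val '' (g ⟨i, h⟩) else ∅ with hB
  have hBsub : ∀ i, B i ⊆ Set.Iio κ.ord := by
    intro i x hx
    simp only [hB] at hx
    by_cases h : i < (Order.succ κ).ord
    · rw [dif_pos h] at hx; obtain ⟨y, _, rfl⟩ := hx; exact y.2
    · rw [dif_neg h] at hx; exact absurd hx (Set.notMem_empty x)
  have hBinj : ∀ i j, i < (Order.succ κ).ord → j < (Order.succ κ).ord → i ≠ j →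
      B i ≠ B j := by
    intro i j hi hj hij hEq
    rw [hB] at hEq
    simp only [dif_pos hi, dif_pos hj] at hEq
    have := (Set.image_injective.mpr Subtype.val_injective) hEq
    exact hij (congrArg Subtype.val (g.injective this))
  refine ⟨fun i => {α | α < κ.ord ∧ B i ∩ Set.Iio α = A α}, fun i hi =>
    ⟨fun α hα => hα.1, hdiamond (B i) (hBsub i)⟩, fun i j hi hj hij hst => ?_⟩
  -- find a point where B i and B j differ
  have hne := hBinj i j hi hj hij
  obtain ⟨β, hβ⟩ : ∃ β, (β ∈ B i ∧ β ∉ B j) ∨ (β ∈ B j ∧ β ∉ B i) := by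
    by_contra h
    push_neg at h
    exact hne (Set.ext fun β => ⟨(h β).1, (h β).2⟩)
  have hβκ : β < κ.ord := by
    rcases hβ with ⟨h1, _⟩ | ⟨h1, _⟩
    exacts [hBsub i h1, hBsub j h1]
  obtain ⟨α, ⟨hαi, hαj⟩, hβα, hακ⟩ := hst _ (isClubIn_Ioo hβκ hlim)
  -- α > β and B i ∩ Iio α = A α = B j ∩ Iio α, contradiction at β
  have : B i ∩ Set.Iio α = B j ∩ Set.Iio α := hαi.2.trans hαj.2.symm
  rcases hβ with ⟨h1, h2⟩ | ⟨h1, h2⟩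
  · have : β ∈ B j ∩ Set.Iio α := this ▸ (⟨h1, hβα⟩ : β ∈ B i ∩ Set.Iio α)
    exact h2 this.1
  · have : β ∈ B i ∩ Set.Iio α := this.symm ▸ (⟨h1, hβα⟩ : β ∈ B j ∩ Set.Iio α)
    exact h2 this.1
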